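/- If configurations A and B each satisfy the universal quantifier w.r.t. an edge constraint E, then every combination of A and B satisfies the universal quantifier w.r.t. E. (Combination is sound.) -/
import Mathlib

namespace RoundElim

/-- The configuration (multiset of cardinality `δ`) associated to a function `Fin δ → α`. -/
def ofFn {α : Type*} {δ : ℕ} (f : Fin δ → α) : Multiset α :=
  (List.ofFn f : List α)

variable {σ : Type*} [DecidableEq σ]

/-- `DominatedBy A B` means: configuration `B` dominates configuration `A`. -/
def DominatedBy (A B : Multiset (Finset σ)) : Prop :=
  Multiset.Rel (· ⊆ ·) A B

/-- `StrictlyDominatedBy A B` means: configuration `B` strictly dominates configuration `A`. -/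
def StrictlyDominatedBy (A B : Multiset (Finset σ)) : Prop :=
  DominatedBy A B ∧ ¬ DominatedBy B A

/-- The combination of the representatives `a`, `b` with respect to the permutation `φ`
and the index `u`: union at position `u`, intersection everywhere else. -/
def combineFn {δ : ℕ} (a b : Fin δ → Finset σ) (φ : Equiv.Perm (Fin δ)) (u : Fin δ) :
    Fin δ → Finset σ :=
  fun i => if i = u then a i ∪ b (φ i) else a i ∩ b (φ i)

/-- `C` is a combination of the configurations `A` and `B`. -/
def IsCombination (δ : ℕ) (C A B : Multiset (Finset σ)) : Prop :=
  ∃ (a b : Fin δ → Finset σ) (φ : Equiv.Perm (Fin δ)) (u : Fin δ),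
    ofFn a = A ∧ ofFn b = B ∧ ofFn (combineFn a b φ u) = C

/-- `C` satisfies the universal quantifier w.r.t. the edge constraint `E`. -/
def SatUQ (E : Set (Multiset σ)) (C : Multiset (Finset σ)) : Prop :=
  ∀ M : Multiset σ, Multiset.Rel (· ∈ ·) M C → M ∈ E

/-- A singleton configuration: all its sets have exactly one element. -/
def IsSingletonConfig (C : Multiset (Finset σ)) : Prop :=
  ∀ s ∈ C, s.card = 1

/-- The combination-closure of a set `Γ` of configurations: the smallest set containing `Γ`
and containing every combination of two of its members. -/
inductive CombClosure (δ : ℕ) (Γ : Set (Multiset (Finset σ))) :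
    Multiset (Finset σ) → Prop
  | base {C : Multiset (Finset σ)} : C ∈ Γ → CombClosure δ Γ C
  | comb {A B C : Multiset (Finset σ)} : CombClosure δ Γ A → CombClosure δ Γ B →
      IsCombination δ C A B → CombClosure δ Γ C


theorem exists_fn_of_rel {α β : Type*} {r : α → β → Prop} :
    ∀ {n : ℕ} (c : Fin n → β) (M : Multiset α), Multiset.Rel r M (ofFn c) →
      ∃ m : Fin n → α, M = ofFn m ∧ ∀ i, r (m i) (c i)
  | 0, c, M, h => by
    refine ⟨Fin.elim0, ?_, fun i => i.elim0⟩
    have : ofFn c = 0 := by simp [ofFn]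
    rw [this, Multiset.rel_zero_right] at h
    simpa [ofFn] using h
  | n + 1, c, M, h => by
    have hc : ofFn c = c 0 ::ₘ ofFn (fun i => c i.succ) := by
      simp [ofFn, List.ofFn_succ]
    rw [hc, Multiset.rel_cons_right] at h
    obtain ⟨a, as, hab, hrel, rfl⟩ := h
    obtain ⟨m, rfl, hm⟩ := exists_fn_of_rel (fun i => c i.succ) as hrel
    refine ⟨Fin.cons a m, ?_, ?_⟩
    · simp [ofFn, List.ofFn_succ]
    · intro i
      refine Fin.cases ?_ ?_ i
      · simpa using hab
      · intro j; simpa using hm j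

theorem rel_ofFn_of_forall {α β : Type*} {r : α → β → Prop} {n : ℕ}
    {f : Fin n → α} {g : Fin n → β} (h : ∀ i, r (f i) (g i)) :
    Multiset.Rel r (ofFn f) (ofFn g) := by
  have : (ofFn f : Multiset α) = Multiset.map f ↑(List.finRange n) := by
    simp [ofFn, List.ofFn_eq_map]
  rw [this]
  have : (ofFn g : Multiset β) = Multiset.map g ↑(List.finRange n) := by
    simp [ofFn, List.ofFn_eq_map]
  rw [this]
  exact Multiset.rel_map.2 (Multiset.rel_eq_refl.mono (fun i _ j _ hij => hij ▸ h i))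

/-- Combination is sound: if configurations `A` and `B` each satisfy the universal quantifier
w.r.t. the edge constraint `E`, then every combination of `A` and `B` satisfies it as well. -/
theorem combination_sound {σ : Type*} [Fintype σ] [DecidableEq σ] (δ : ℕ) (hδ : 0 < δ)
    (E : Set (Multiset σ)) (A B C : Multiset (Finset σ))
    (hA : SatUQ E A) (hB : SatUQ E B) (hC : IsCombination δ C A B) :
    SatUQ E C := by
  obtain ⟨a, b, φ, u, rfl, rfl, rfl⟩ := hC
  intro M hM
  obtain ⟨m, rfl, hm⟩ := exists_fn_of_rel _ M hM
  by_cases hu : m u ∈ a u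
  · refine hA _ (rel_ofFn_of_forall fun i => ?_)
    by_cases hi : i = u
    · subst hi; exact hu
    · have := hm i
      simp [combineFn, hi] at this
      exact this.1
  · have hbu : m u ∈ b (φ u) := by
      have := hm u
      simp [combineFn] at this
      tauto
    have hb : ∀ i, m i ∈ b (φ i) := by
      intro i
      by_cases hi : i = u
      · subst hi; exact hbu
      · have := hm i
        simp [combineFn, hi] at this
        exact this.2
    have h1 : Multiset.Rel (· ∈ ·) (ofFn m) (ofFn (b ∘ φ)) :=
      rel_ofFn_of_forall hb
    have h2 : (ofFn (b ∘ φ) : Multiset (Finset σ)) = ofFn b := by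
      exact Quot.sound (φ.ofFn_comp_perm b)
    exact hB _ (h2 ▸ h1)

end RoundElim
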